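/- Let 𝒞 be a reduced (m,n,2)-scheme. If m − 1 is a prime power, then n = 1. -/
import Mathlib


open scoped Classical

namespace CCPaper

variable {V : Type*}

/-- The diagonal relation `Δ_X = {(x,x) : x ∈ X}` on a subset `X ⊆ V`. -/
def diag (X : Set V) : Set (V × V) := {p : V × V | p.1 ∈ X ∧ p.1 = p.2}

/-- The transpose `R^t = {(v,u) : (u,v) ∈ R}` of a relation. -/
def transp (R : Set (V × V)) : Set (V × V) := Prod.swap ⁻¹' R

/-- The intersection number `|{w : (p.1,w) ∈ R, (w,p.2) ∈ S}|` at a pair `p`. -/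
noncomputable def iNum (R S : Set (V × V)) (p : V × V) : ℕ :=
  Nat.card {w : V | (p.1, w) ∈ R ∧ (w, p.2) ∈ S}

/-- `ℛ` is a coherent configuration (scheme) on the finite set `V`:
(C1) `ℛ` consists of nonempty relations partitioning `V × V`;
(C2) the diagonal is a union of relations of `ℛ`;
(C3) `ℛ` is closed under transposition;
(C4) intersection numbers are constant on each relation of `ℛ`. -/
def IsCC [Fintype V] (ℛ : Set (Set (V × V))) : Prop :=
  (∀ R ∈ ℛ, R.Nonempty) ∧
  (∀ p : V × V, ∃! R, R ∈ ℛ ∧ p ∈ R) ∧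
  (∀ R ∈ ℛ, (∃ p ∈ R, p.1 = p.2) → ∀ p ∈ R, p.1 = p.2) ∧
  (∀ R ∈ ℛ, transp R ∈ ℛ) ∧
  (∀ R ∈ ℛ, ∀ S ∈ ℛ, ∀ T ∈ ℛ, ∀ p ∈ T, ∀ q ∈ T, iNum R S p = iNum R S q)

/-- A fiber of the configuration: a nonempty `X ⊆ V` with `Δ_X ∈ ℛ`. -/
def IsFiber [Fintype V] (ℛ : Set (Set (V × V))) (X : Set V) : Prop :=
  X.Nonempty ∧ diag X ∈ ℛ

/-- `ℛ_{X,Y}`, the set of basis relations contained in `X × Y`. -/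
def relsBtw [Fintype V] (ℛ : Set (Set (V × V))) (X Y : Set V) : Set (Set (V × V)) :=
  {R | R ∈ ℛ ∧ R ⊆ X ×ˢ Y}

/-- Out-degree `d_R = |R_out(x)|` (computed at a chosen point of `R`;
for a basis relation of a scheme this is independent of the point). -/
noncomputable def outDeg (R : Set (V × V)) : ℕ :=
  if h : R.Nonempty then Nat.card {y : V | (h.choose.1, y) ∈ R} else 0

/-- In-degree `e_R = |R_in(y)|` (computed at a chosen point of `R`). -/
noncomputable def inDeg (R : Set (V × V)) : ℕ :=
  if h : R.Nonempty then Nat.card {x : V | (x, h.choose.2) ∈ R} else 0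

/-- The structure constant `c_{RS}^T` (computed at a chosen pair of `T`). -/
noncomputable def sConst (R S T : Set (V × V)) : ℕ :=
  if h : T.Nonempty then iNum R S h.choose else 0

/-- The complex product `RS = {T ∈ ℛ : c_{RS}^T > 0}`. -/
def cProd [Fintype V] (ℛ : Set (Set (V × V))) (R S : Set (V × V)) : Set (Set (V × V)) :=
  {T | T ∈ ℛ ∧ 0 < sConst R S T}

/-- A relation is thin if `d_R = e_R = 1`. -/
def IsThin (R : Set (V × V)) : Prop := outDeg R = 1 ∧ inDeg R = 1

/-- `ℛ` is `r`-balanced: `|ℛ_{X,Y}| = r` for all fibers `X, Y`. -/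
def IsBalancedWith [Fintype V] (ℛ : Set (Set (V × V))) (r : ℕ) : Prop :=
  ∀ X Y : Set V, IsFiber ℛ X → IsFiber ℛ Y → Nat.card (relsBtw ℛ X Y) = r

/-- `ℛ` is balanced: `|ℛ_{X,Y}|` is the same for all pairs of fibers. -/
def IsBalanced [Fintype V] (ℛ : Set (Set (V × V))) : Prop := ∃ r : ℕ, IsBalancedWith ℛ r

/-- An `(m,n,r)`-scheme: a coherent configuration which is `r`-balanced, all of whose
fibers have size `m`, and which has exactly `n` fibers. -/
def IsMNRScheme [Fintype V] (ℛ : Set (Set (V × V))) (m n r : ℕ) : Prop :=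
  IsCC ℛ ∧ IsBalancedWith ℛ r ∧ (∀ X : Set V, IsFiber ℛ X → Nat.card X = m) ∧
    Nat.card {X : Set V | IsFiber ℛ X} = n

/-- A scheme is reduced if no basis relation between distinct fibers is thin. -/
def IsReduced [Fintype V] (ℛ : Set (Set (V × V))) : Prop :=
  ∀ X Y : Set V, IsFiber ℛ X → IsFiber ℛ Y → X ≠ Y → ∀ R ∈ relsBtw ℛ X Y, ¬ IsThin R

/-- A (possibly empty) union of fibers. -/
def IsFiberUnion [Fintype V] (ℛ : Set (Set (V × V))) (U : Set V) : Prop :=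
  ∃ F : Set (Set V), (∀ X ∈ F, IsFiber ℛ X) ∧ U = ⋃₀ F

/-- The adjacency matrix of a relation. -/
noncomputable def adjMat [Fintype V] (R : Set (V × V)) : Matrix V V ℂ :=
  fun u v => if (u, v) ∈ R then 1 else 0

/-- The diagonal idempotent `I_X` of a subset `X ⊆ V`. -/
noncomputable def idMat [Fintype V] (X : Set V) : Matrix V V ℂ :=
  fun u v => if u = v ∧ u ∈ X then 1 else 0

/-- The adjacency algebra `𝒜(𝒞)`, the subalgebra of `Mat_V(ℂ)` spanned by the
adjacency matrices of the basis relations. -/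
noncomputable def adjAlg [Fintype V] [DecidableEq V] (ℛ : Set (Set (V × V))) :
    Subalgebra ℂ (Matrix V V ℂ) :=
  Algebra.adjoin ℂ (adjMat '' ℛ)

/-- `P` is a central primitive idempotent of the (multiplicatively closed) set of
matrices `S`: `P ∈ S` is a nonzero idempotent commuting with everything in `S`, which is
not the sum of two nonzero orthogonal central idempotents of `S`. -/
def IsCPIin [Fintype V] (S : Set (Matrix V V ℂ)) (P : Matrix V V ℂ) : Prop :=
  P ∈ S ∧ P ≠ 0 ∧ P * P = P ∧ (∀ Q ∈ S, P * Q = Q * P) ∧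
  ∀ Q₁ Q₂ : Matrix V V ℂ, Q₁ ∈ S → Q₂ ∈ S →
    Q₁ * Q₁ = Q₁ → Q₂ * Q₂ = Q₂ →
    (∀ M ∈ S, Q₁ * M = M * Q₁) → (∀ M ∈ S, Q₂ * M = M * Q₂) →
    Q₁ * Q₂ = 0 → Q₂ * Q₁ = 0 → P = Q₁ + Q₂ → Q₁ = 0 ∨ Q₂ = 0

/-- `𝒫(𝒞)`: the set of central primitive idempotents of the adjacency algebra. -/
def CPIs [Fintype V] [DecidableEq V] (ℛ : Set (Set (V × V))) : Set (Matrix V V ℂ) :=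
  {P | IsCPIin (adjAlg ℛ : Set (Matrix V V ℂ)) P}

/-- The adjacency algebra `I_X · 𝒜(𝒞) · I_X` of the homogeneous component `𝒞_X`,
as a subset of `Mat_V(ℂ)`. -/
def compAlgSet [Fintype V] [DecidableEq V] (ℛ : Set (Set (V × V))) (X : Set V) :
    Set (Matrix V V ℂ) :=
  {M | ∃ N ∈ adjAlg ℛ, M = idMat X * N * idMat X}

/-- `𝒫(𝒞_X)`: the central primitive idempotents of the homogeneous component `𝒞_X`. -/
def CPIsComp [Fintype V] [DecidableEq V] (ℛ : Set (Set (V × V))) (X : Set V) :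
    Set (Matrix V V ℂ) :=
  {P | IsCPIin (compAlgSet ℛ X) P}

/-- The degree `n_P` of a central primitive idempotent `P` of the algebra (given as the
set `S`): the positive integer with `n_P ^ 2 = dim_ℂ (S · P)`. -/
noncomputable def degOf [Fintype V] [DecidableEq V] (S : Set (Matrix V V ℂ))
    (P : Matrix V V ℂ) : ℕ :=
  Nat.sqrt (Module.finrank ℂ
    (Submodule.span ℂ {M : Matrix V V ℂ | ∃ a ∈ S, M = a * P}))



section Helpers

variable [Fintype V] {ℛ : Set (Set (V × V))}

lemma natCard_setOf (p : V → Prop) [DecidablePred p] :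
    Nat.card {w | p w} = (Finset.univ.filter p).card := by
  rw [← Set.ncard_coe_finset, Nat.card_coe_set_eq]
  congr 1
  ext w
  simp

lemma sum_card_filter_comm (P : V → V → Prop) :
    ∑ x : V, (Finset.univ.filter fun y => P x y).card
      = ∑ y : V, (Finset.univ.filter fun x => P x y).card := by
  simp only [Finset.card_filter]
  exact Finset.sum_comm

lemma exists_fiber_mem (hcc : IsCC ℛ) (v : V) : ∃ X, IsFiber ℛ X ∧ v ∈ X := by
  obtain ⟨R, ⟨hR, hvR⟩, -⟩ := hcc.2.1 (v, v)
  have hdiag : ∀ p ∈ R, p.1 = p.2 := hcc.2.2.1 R hR ⟨(v, v), hvR, rfl⟩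
  refine ⟨{x | (x, x) ∈ R}, ⟨⟨v, hvR⟩, ?_⟩, hvR⟩
  have : diag {x | (x, x) ∈ R} = R := by
    ext ⟨a, b⟩
    simp only [diag, Set.mem_setOf_eq]
    constructor
    · rintro ⟨ha, rfl⟩; exact ha
    · intro hab
      have hab2 := hdiag (a, b) hab
      simp only at hab2
      subst hab2; exact ⟨hab, rfl⟩
  rwa [this]

lemma mem_left (hcc : IsCC ℛ) {R : Set (V × V)} (hR : R ∈ ℛ) {X : Set V}
    (hX : IsFiber ℛ X) {p q : V × V} (hp : p ∈ R) (hq : q ∈ R) (h1 : p.1 ∈ X) :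
    q.1 ∈ X := by
  have h4 := hcc.2.2.2.2 (diag X) hX.2 R hR R hR p hp q hq
  have hset : {w | (p.1, w) ∈ diag X ∧ (w, p.2) ∈ R} = {p.1} := by
    ext w
    simp only [diag, Set.mem_setOf_eq, Set.mem_singleton_iff]
    constructor
    · rintro ⟨⟨-, rfl⟩, -⟩; rfl
    · rintro rfl; exact ⟨⟨h1, rfl⟩, by simpa using hp⟩
  have h1' : iNum (diag X) R p = 1 := by
    rw [iNum, hset]; simp
  rw [h1'] at h4
  have hne : {w | (q.1, w) ∈ diag X ∧ (w, q.2) ∈ R}.Nonempty := by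
    by_contra hempty
    rw [Set.not_nonempty_iff_eq_empty] at hempty
    rw [iNum, hempty] at h4
    simp at h4
  obtain ⟨w, hw1, -⟩ := hne
  exact hw1.1

lemma mem_right (hcc : IsCC ℛ) {R : Set (V × V)} (hR : R ∈ ℛ) {Y : Set V}
    (hY : IsFiber ℛ Y) {p q : V × V} (hp : p ∈ R) (hq : q ∈ R) (h2 : p.2 ∈ Y) :
    q.2 ∈ Y := by
  have h4 := hcc.2.2.2.2 R hR (diag Y) hY.2 R hR p hp q hq
  have hset : {w | (p.1, w) ∈ R ∧ (w, p.2) ∈ diag Y} = {p.2} := by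
    ext w
    simp only [diag, Set.mem_setOf_eq, Set.mem_singleton_iff]
    constructor
    · rintro ⟨-, -, rfl⟩; rfl
    · rintro rfl; exact ⟨by simpa using hp, h2, rfl⟩
  have h1' : iNum R (diag Y) p = 1 := by
    rw [iNum, hset]; simp
  rw [h1'] at h4
  have hne : {w | (q.1, w) ∈ R ∧ (w, q.2) ∈ diag Y}.Nonempty := by
    by_contra hempty
    rw [Set.not_nonempty_iff_eq_empty] at hempty
    rw [iNum, hempty] at h4
    simp at h4
  obtain ⟨w, -, hw2⟩ := hne
  rw [← hw2.2]; exact hw2.1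

lemma rel_eq (hcc : IsCC ℛ) {R S : Set (V × V)} (hR : R ∈ ℛ) (hS : S ∈ ℛ)
    {p : V × V} (hpR : p ∈ R) (hpS : p ∈ S) : R = S := by
  obtain ⟨U, -, hu⟩ := hcc.2.1 p
  rw [hu R ⟨hR, hpR⟩, hu S ⟨hS, hpS⟩]

end Helpers

/-- **Theorem (Statement 16).** If `𝒞` is a reduced `(m,n,2)`-scheme and `m - 1` is a
prime power, then `n = 1`. -/
theorem reduced_mn2_prime_power
    {V : Type*} [Fintype V] [Nonempty V]
    (ℛ : Set (Set (V × V))) (m n : ℕ) (h : IsMNRScheme ℛ m n 2) (hred : IsReduced ℛ)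
    (hm : IsPrimePow (m - 1)) :
    n = 1 := by
  classical
  by_contra hn1
  obtain ⟨hcc, hbal, hsize, hcard⟩ := h
  have hm2 : 2 ≤ m - 1 := hm.two_le
  have hm3 : 3 ≤ m := by omega
  obtain ⟨X₀, hX₀, -⟩ := exists_fiber_mem hcc (Classical.arbitrary V)
  rw [Nat.card_coe_set_eq] at hcard
  have hpos : 0 < Set.ncard {X : Set V | IsFiber ℛ X} :=
    (Set.ncard_pos (Set.toFinite _)).mpr ⟨X₀, hX₀⟩
  have hgt : 1 < Set.ncard {X : Set V | IsFiber ℛ X} := by omega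
  obtain ⟨X, hXf, Y, hYf, hXY⟩ := (Set.one_lt_ncard).mp hgt
  replace hXf : IsFiber ℛ X := hXf
  replace hYf : IsFiber ℛ Y := hYf
  obtain ⟨x₀, hx₀⟩ := hXf.1
  obtain ⟨y₀, hy₀⟩ := hYf.1
  have hC4 := hcc.2.2.2.2
  have htR : ∀ R ∈ ℛ, transp R ∈ ℛ := hcc.2.2.2.1
  have hrel_of_pair : ∀ {X' Y' : Set V}, IsFiber ℛ X' → IsFiber ℛ Y' →
      ∀ p : V × V, p.1 ∈ X' → p.2 ∈ Y' → ∃ U ∈ relsBtw ℛ X' Y', p ∈ U := by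
    intro X' Y' hX' hY' p hp1 hp2
    obtain ⟨U, ⟨hU, hpU⟩, -⟩ := hcc.2.1 p
    refine ⟨U, ⟨hU, ?_⟩, hpU⟩
    rintro ⟨a, b⟩ hab
    exact ⟨mem_left hcc hU hX' hpU hab hp1, mem_right hcc hU hY' hpU hab hp2⟩
  obtain ⟨R, hRXY, hx0y0⟩ := hrel_of_pair hXf hYf (x₀, y₀) hx₀ hy₀
  have hR : R ∈ ℛ := hRXY.1
  have hRsub : R ⊆ X ×ˢ Y := hRXY.2
  have hcardXY : Set.ncard (relsBtw ℛ X Y) = 2 := by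
    rw [← Nat.card_coe_set_eq]; exact hbal X Y hXf hYf
  obtain ⟨A, B, hAB, hABeq⟩ := Set.ncard_eq_two.mp hcardXY
  obtain ⟨S, hSXY, hRS, hpairXY⟩ :
      ∃ S, S ∈ relsBtw ℛ X Y ∧ R ≠ S ∧ relsBtw ℛ X Y = {R, S} := by
    have hRmem : R ∈ ({A, B} : Set (Set (V × V))) := hABeq ▸ hRXY
    rcases Set.mem_insert_iff.mp hRmem with h' | h'
    · exact ⟨B, by rw [hABeq]; exact Set.mem_insert_iff.mpr (Or.inr rfl),
        by rw [h']; exact hAB, by rw [hABeq, h']⟩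
    · have h'' := Set.eq_of_mem_singleton h'
      exact ⟨A, by rw [hABeq]; exact Set.mem_insert_iff.mpr (Or.inl rfl),
        by rw [h'']; exact Ne.symm hAB, by rw [hABeq, h'', Set.pair_comm]⟩
  have hS : S ∈ ℛ := hSXY.1
  have hSsub : S ⊆ X ×ˢ Y := hSXY.2
  have hSne : S.Nonempty := hcc.1 S hS
  have hcover : ∀ p : V × V, p.1 ∈ X → p.2 ∈ Y → p ∈ R ∨ p ∈ S := by
    intro p h1 h2
    obtain ⟨U, hU, hpU⟩ := hrel_of_pair hXf hYf p h1 h2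
    rw [hpairXY] at hU
    rcases Set.mem_insert_iff.mp hU with h' | h'
    · left; rwa [← h']
    · right; rw [← Set.eq_of_mem_singleton h']; exact hpU
  have hdisjRS : ∀ p : V × V, p ∈ R → p ∈ S → False := fun p hpR hpS =>
    hRS (rel_eq hcc hR hS hpR hpS)
  -- relsBtw X X = {diag X, T}
  have hdiagXX : diag X ∈ relsBtw ℛ X X := by
    refine ⟨hXf.2, ?_⟩
    rintro ⟨a, b⟩ ⟨ha, hb⟩
    simp only at ha hb
    subst hb
    exact ⟨ha, ha⟩
  have hcardXX : Set.ncard (relsBtw ℛ X X) = 2 := by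
    rw [← Nat.card_coe_set_eq]; exact hbal X X hXf hXf
  obtain ⟨A', B', hAB', hABeq'⟩ := Set.ncard_eq_two.mp hcardXX
  obtain ⟨T, hTXX, hdT, hpairXX⟩ :
      ∃ T, T ∈ relsBtw ℛ X X ∧ diag X ≠ T ∧ relsBtw ℛ X X = {diag X, T} := by
    have hdm : diag X ∈ ({A', B'} : Set (Set (V × V))) := hABeq' ▸ hdiagXX
    rcases Set.mem_insert_iff.mp hdm with h' | h'
    · exact ⟨B', by rw [hABeq']; exact Set.mem_insert_iff.mpr (Or.inr rfl),
        by rw [h']; exact hAB', by rw [hABeq', h']⟩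
    · have h'' := Set.eq_of_mem_singleton h'
      exact ⟨A', by rw [hABeq']; exact Set.mem_insert_iff.mpr (Or.inl rfl),
        by rw [h'']; exact Ne.symm hAB', by rw [hABeq', h'', Set.pair_comm]⟩
  have hT : T ∈ ℛ := hTXX.1
  have hTsub : T ⊆ X ×ˢ X := hTXX.2
  have hofdiag : ∀ a b : V, a ∈ X → b ∈ X → a ≠ b → (a, b) ∈ T := by
    intro a b ha hb hab
    obtain ⟨U, hU, hpU⟩ := hrel_of_pair hXf hXf (a, b) ha hb
    rw [hpairXX] at hU
    rcases Set.mem_insert_iff.mp hU with h' | h'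
    · exfalso; rw [h'] at hpU; exact hab hpU.2
    · rw [← Set.eq_of_mem_singleton h']; exact hpU
  obtain ⟨t, ht⟩ := hcc.1 T hT
  have ht1 : t.1 ∈ X := (hTsub ht).1
  have htne : t.1 ≠ t.2 := by
    intro he
    exact hdT (rel_eq hcc hXf.2 hT (⟨ht1, he⟩ : t ∈ diag X) ht)
  set lam := iNum R (transp R) t with hlamdef
  have hlam : ∀ a b : V, a ∈ X → b ∈ X → a ≠ b → iNum R (transp R) (a, b) = lam :=
    fun a b ha hb hab =>
      hC4 R hR (transp R) (htR R hR) T hT (a, b) (hofdiag a b ha hb hab) t ht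
  have hiNum2 : ∀ a b : V, iNum R (transp R) (a, b)
      = Nat.card {w | (a, w) ∈ R ∧ (b, w) ∈ R} := fun a b => rfl
  have hiNum3 : ∀ b : V, iNum (transp R) R (b, b) = Nat.card {w | (w, b) ∈ R} := by
    intro b
    have h0 : iNum (transp R) R (b, b)
        = Nat.card {w | (b, w) ∈ transp R ∧ (w, b) ∈ R} := rfl
    have hs1 : {w | (b, w) ∈ transp R ∧ (w, b) ∈ R} = {w | (w, b) ∈ R} := by
      ext w
      simp [transp]
    rw [h0, hs1]
  -- degrees of R
  set k := (Finset.univ.filter fun y => (x₀, y) ∈ R).card with hkdef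
  have hcompd : ∀ z : V, iNum R (transp R) (z, z)
      = (Finset.univ.filter fun y => (z, y) ∈ R).card := by
    intro z
    have hseteq : {w | (z, w) ∈ R ∧ (z, w) ∈ R} = {w | (z, w) ∈ R} := by
      ext w; simp
    rw [hiNum2, hseteq, natCard_setOf]
  have hdconst : ∀ x ∈ X, (Finset.univ.filter fun y => (x, y) ∈ R).card = k := by
    intro x hx
    have h4 : iNum R (transp R) (x, x) = iNum R (transp R) (x₀, x₀) :=
      hC4 R hR (transp R) (htR R hR) (diag X) hXf.2 (x, x) ⟨hx, rfl⟩ (x₀, x₀) ⟨hx₀, rfl⟩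
    rw [← hcompd x, h4, hcompd x₀]
  set e := (Finset.univ.filter fun x => (x, y₀) ∈ R).card with hedef
  have hcompe : ∀ z : V, iNum (transp R) R (z, z)
      = (Finset.univ.filter fun x => (x, z) ∈ R).card := by
    intro z
    rw [hiNum3, natCard_setOf]
  have heconst : ∀ y ∈ Y, (Finset.univ.filter fun x => (x, y) ∈ R).card = e := by
    intro y hy
    have h4 : iNum (transp R) R (y, y) = iNum (transp R) R (y₀, y₀) :=
      hC4 (transp R) (htR R hR) R hR (diag Y) hYf.2 (y, y) ⟨hy, rfl⟩ (y₀, y₀) ⟨hy₀, rfl⟩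
    rw [← hcompe y, h4, hcompe y₀]
  have hdzero : ∀ x : V, x ∉ X → (Finset.univ.filter fun y => (x, y) ∈ R).card = 0 := by
    intro x hx
    rw [Finset.card_eq_zero, Finset.filter_eq_empty_iff]
    intro y _
    exact fun hy => hx (hRsub hy).1
  have hezero : ∀ y : V, y ∉ Y → (Finset.univ.filter fun x => (x, y) ∈ R).card = 0 := by
    intro y hy
    rw [Finset.card_eq_zero, Finset.filter_eq_empty_iff]
    intro x _
    exact fun hx => hy (hRsub hx).2
  have hXm : X.toFinset.card = m := by
    have hh := hsize X hXf
    rwa [Nat.card_coe_set_eq, Set.ncard_eq_toFinset_card'] at hh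
  have hYm : Y.toFinset.card = m := by
    have hh := hsize Y hYf
    rwa [Nat.card_coe_set_eq, Set.ncard_eq_toFinset_card'] at hh
  have hke : k = e := by
    have hsum := sum_card_filter_comm (fun x y => (x, y) ∈ R)
    have hL : ∑ x : V, (Finset.univ.filter fun y => (x, y) ∈ R).card = m * k := by
      have hthis : ∀ x : V, (Finset.univ.filter fun y => (x, y) ∈ R).card
          = if x ∈ X.toFinset then k else 0 := by
        intro x
        by_cases hx : x ∈ X
        · rw [if_pos (Set.mem_toFinset.mpr hx)]; exact hdconst x hx
        · rw [if_neg fun hc => hx (Set.mem_toFinset.mp hc)]; exact hdzero x hx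
      rw [Finset.sum_congr rfl fun x _ => hthis x, Finset.sum_ite_mem,
        Finset.univ_inter, Finset.sum_const, hXm, smul_eq_mul]
    have hRy : ∑ y : V, (Finset.univ.filter fun x => (x, y) ∈ R).card = m * e := by
      have hthis : ∀ y : V, (Finset.univ.filter fun x => (x, y) ∈ R).card
          = if y ∈ Y.toFinset then e else 0 := by
        intro y
        by_cases hy : y ∈ Y
        · rw [if_pos (Set.mem_toFinset.mpr hy)]; exact heconst y hy
        · rw [if_neg fun hc => hy (Set.mem_toFinset.mp hc)]; exact hezero y hy
      rw [Finset.sum_congr rfl fun y _ => hthis y, Finset.sum_ite_mem,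
        Finset.univ_inter, Finset.sum_const, hYm, smul_eq_mul]
    rw [hL, hRy] at hsum
    exact Nat.eq_of_mul_eq_mul_left (by omega) hsum
  have hsplitd : ∀ x ∈ X, (Finset.univ.filter fun y => (x, y) ∈ R).card
      + (Finset.univ.filter fun y => (x, y) ∈ S).card = m := by
    intro x hx
    have hunion : (Finset.univ.filter fun y => (x, y) ∈ R)
        ∪ (Finset.univ.filter fun y => (x, y) ∈ S) = Y.toFinset := by
      ext y
      simp only [Finset.mem_union, Finset.mem_filter, Finset.mem_univ, true_and,
        Set.mem_toFinset]
      constructor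
      · rintro (h' | h')
        · exact (hRsub h').2
        · exact (hSsub h').2
      · intro hy; exact hcover (x, y) hx hy
    have hdisj : Disjoint (Finset.univ.filter fun y => (x, y) ∈ R)
        (Finset.univ.filter fun y => (x, y) ∈ S) := by
      rw [Finset.disjoint_left]
      intro y hy1 hy2
      simp only [Finset.mem_filter, Finset.mem_univ, true_and] at hy1 hy2
      exact hdisjRS (x, y) hy1 hy2
    rw [← Finset.card_union_of_disjoint hdisj, hunion, hYm]
  have hsplite : ∀ y ∈ Y, (Finset.univ.filter fun x => (x, y) ∈ R).card
      + (Finset.univ.filter fun x => (x, y) ∈ S).card = m := by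
    intro y hy
    have hunion : (Finset.univ.filter fun x => (x, y) ∈ R)
        ∪ (Finset.univ.filter fun x => (x, y) ∈ S) = X.toFinset := by
      ext x
      simp only [Finset.mem_union, Finset.mem_filter, Finset.mem_univ, true_and,
        Set.mem_toFinset]
      constructor
      · rintro (h' | h')
        · exact (hRsub h').1
        · exact (hSsub h').1
      · intro hx; exact hcover (x, y) hx hy
    have hdisj : Disjoint (Finset.univ.filter fun x => (x, y) ∈ R)
        (Finset.univ.filter fun x => (x, y) ∈ S) := by
      rw [Finset.disjoint_left]
      intro x hx1 hx2
      simp only [Finset.mem_filter, Finset.mem_univ, true_and] at hx1 hx2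
      exact hdisjRS (x, y) hx1 hx2
    rw [← Finset.card_union_of_disjoint hdisj, hunion, hXm]
  -- outDeg and inDeg of R and S
  have hRne : R.Nonempty := ⟨(x₀, y₀), hx0y0⟩
  have houtR : outDeg R = k := by
    rw [outDeg, dif_pos hRne, natCard_setOf]
    exact hdconst _ (hRsub hRne.choose_spec).1
  have hinR : inDeg R = k := by
    rw [inDeg, dif_pos hRne, natCard_setOf,
      heconst _ (hRsub hRne.choose_spec).2]
    exact hke.symm
  have houtS : outDeg S = m - k := by
    rw [outDeg, dif_pos hSne, natCard_setOf]
    have h1 := hsplitd _ (hSsub hSne.choose_spec).1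
    have h2 := hdconst _ (hSsub hSne.choose_spec).1
    omega
  have hinS : inDeg S = m - k := by
    rw [inDeg, dif_pos hSne, natCard_setOf]
    have h1 := hsplite _ (hSsub hSne.choose_spec).2
    have h2 := heconst _ (hSsub hSne.choose_spec).2
    omega
  -- bounds on k
  have hth1 := hred X Y hXf hYf hXY R hRXY
  have hth2 := hred X Y hXf hYf hXY S hSXY
  simp only [IsThin, houtR, hinR, houtS, hinS, and_self] at hth1 hth2
  have hkpos : 0 < k := by
    rw [hkdef]
    exact Finset.card_pos.mpr ⟨y₀, Finset.mem_filter.mpr ⟨Finset.mem_univ _, hx0y0⟩⟩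
  obtain ⟨s0, hs0⟩ := hSne
  have hSdpos : 0 < (Finset.univ.filter fun y => (s0.1, y) ∈ S).card :=
    Finset.card_pos.mpr ⟨s0.2, Finset.mem_filter.mpr ⟨Finset.mem_univ _, by simpa using hs0⟩⟩
  have hsp := hsplitd s0.1 (hSsub hs0).1
  have hsd := hdconst s0.1 (hSsub hs0).1
  have hk2 : 2 ≤ k := by omega
  have hkm2 : k + 2 ≤ m := by omega
  -- double counting
  have hway : ∑ x' : V,
      (Finset.univ.filter fun w => (x₀, w) ∈ R ∧ (x', w) ∈ R ∧ x' ≠ x₀).card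
      = ∑ w : V,
      (Finset.univ.filter fun x' => (x₀, w) ∈ R ∧ (x', w) ∈ R ∧ x' ≠ x₀).card := by
    simp only [Finset.card_filter]
    exact Finset.sum_comm
  have hway1 : ∑ x' : V,
      (Finset.univ.filter fun w => (x₀, w) ∈ R ∧ (x', w) ∈ R ∧ x' ≠ x₀).card
      = (m - 1) * lam := by
    have hinner : ∀ x' : V,
        (Finset.univ.filter fun w => (x₀, w) ∈ R ∧ (x', w) ∈ R ∧ x' ≠ x₀).card
        = if x' ∈ X.toFinset.erase x₀ then lam else 0 := by
      intro x'
      by_cases hx' : x' ∈ X ∧ x' ≠ x₀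
      · rw [if_pos (Finset.mem_erase.mpr ⟨hx'.2, Set.mem_toFinset.mpr hx'.1⟩)]
        rw [← natCard_setOf]
        have hseteq : {w | (x₀, w) ∈ R ∧ (x', w) ∈ R ∧ x' ≠ x₀}
            = {w | (x₀, w) ∈ R ∧ (x', w) ∈ R} := by
          ext w; simp [hx'.2]
        rw [hseteq, ← hiNum2]
        exact hlam x₀ x' hx₀ hx'.1 (Ne.symm hx'.2)
      · rw [if_neg (by
          intro hc
          rw [Finset.mem_erase, Set.mem_toFinset] at hc
          exact hx' ⟨hc.2, hc.1⟩)]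
        rw [Finset.card_eq_zero, Finset.filter_eq_empty_iff]
        intro w _
        rintro ⟨-, h2', h3'⟩
        exact hx' ⟨(hRsub h2').1, h3'⟩
    rw [Finset.sum_congr rfl fun x' _ => hinner x', Finset.sum_ite_mem,
      Finset.univ_inter, Finset.sum_const, smul_eq_mul,
      Finset.card_erase_of_mem (Set.mem_toFinset.mpr hx₀), hXm]
  have hway2 : ∑ w : V,
      (Finset.univ.filter fun x' => (x₀, w) ∈ R ∧ (x', w) ∈ R ∧ x' ≠ x₀).card
      = k * (k - 1) := by
    have hinner : ∀ w : V,
        (Finset.univ.filter fun x' => (x₀, w) ∈ R ∧ (x', w) ∈ R ∧ x' ≠ x₀).card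
        = if (x₀, w) ∈ R then k - 1 else 0 := by
      intro w
      by_cases hw : (x₀, w) ∈ R
      · rw [if_pos hw]
        have hfe : (Finset.univ.filter fun x' => (x₀, w) ∈ R ∧ (x', w) ∈ R ∧ x' ≠ x₀)
            = (Finset.univ.filter fun x' => (x', w) ∈ R).erase x₀ := by
          ext x'
          simp only [Finset.mem_filter, Finset.mem_univ, true_and, Finset.mem_erase, hw,
            true_and]
          tauto
        rw [hfe, Finset.card_erase_of_mem (a := x₀)
          (s := Finset.univ.filter fun x' => (x', w) ∈ R)
          (Finset.mem_filter.mpr ⟨Finset.mem_univ _, hw⟩), heconst w (hRsub hw).2, hke]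
      · rw [if_neg hw, Finset.card_eq_zero, Finset.filter_eq_empty_iff]
        intro x' _
        rintro ⟨h1', -, -⟩
        exact hw h1'
    calc ∑ w : V,
        (Finset.univ.filter fun x' => (x₀, w) ∈ R ∧ (x', w) ∈ R ∧ x' ≠ x₀).card
        = ∑ w : V, if (x₀, w) ∈ R then k - 1 else 0 :=
          Finset.sum_congr rfl fun w _ => hinner w
      _ = ∑ _w ∈ Finset.univ.filter (fun w => (x₀, w) ∈ R), (k - 1) :=
          (Finset.sum_filter _ _).symm
      _ = (Finset.univ.filter fun w => (x₀, w) ∈ R).card * (k - 1) := by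
          rw [Finset.sum_const, smul_eq_mul]
      _ = k * (k - 1) := by rw [hdconst x₀ hx₀]
  have hkey : (m - 1) * lam = k * (k - 1) := by rw [← hway1, hway, hway2]
  have hdvd : (m - 1) ∣ k * (k - 1) := ⟨lam, hkey.symm⟩
  have hcop : Nat.Coprime k (k - 1) := by
    have h2' : k = (k - 1) + 1 := by omega
    rw [h2']
    exact Nat.coprime_self_add_left.mpr (Nat.coprime_one_left _)
  rcases (hcop.isPrimePow_dvd_mul hm).mp hdvd with hd | hd
  · have := Nat.le_of_dvd (by omega) hd
    omega
  · have := Nat.le_of_dvd (by omega) hd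
    omega


end CCPaper
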